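/- arXiv:0903.4289 — 3 statements merged into one kernel-verified Lean document; each statement's English description precedes it below -/
import Mathlib

section
/- Two finite subsets A, B of the circle ℝ/ℤ are unlinked (i.e., B is contained in a single connected component of (ℝ/ℤ) \ A) if and only if A is contained in a single connected component of (ℝ/ℤ) \ B. -/
open Set Topology

/-- The circle `ℝ/ℤ`. -/
abbrev Circle1 := AddCircle (1 : ℝ)

/-- `A` and `B` are *unlinked*: `B` is contained in a single connected component of the
complement `(ℝ/ℤ) \ A`. -/
def SetUnlinked (A B : Set Circle1) : Prop :=
  ∃ z ∈ Aᶜ, B ⊆ connectedComponentIn Aᶜ z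

namespace SetUnlinkedAux

instance fact01 : Fact ((0:ℝ) < 1) := ⟨one_pos⟩

instance : Infinite Circle1 := by
  haveI : Infinite (Ico (0:ℝ) (0+1)) := by
    rw [zero_add]; exact (Set.Ico_infinite one_pos).to_subtype
  exact Infinite.of_injective _ (AddCircle.equivIco (1:ℝ) 0).symm.injective

lemma rep_exists (c : ℝ) (w : Circle1) : ∃ x ∈ Ico c (c+1), (x : Circle1) = w :=
  ⟨_, (AddCircle.equivIco 1 c w).2, (AddCircle.equivIco 1 c).symm_apply_apply w⟩

lemma coe_inj {x y : ℝ} (h : (x : Circle1) = y) (hxy : |x - y| < 1) : x = y := by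
  rw [QuotientAddGroup.eq_iff_sub_mem] at h
  obtain ⟨n, hn⟩ := AddSubgroup.mem_zmultiples_iff.mp h
  have hcast : (n : ℝ) = x - y := by simpa using hn
  have h1 : |(n : ℝ)| < 1 := by rw [hcast]; exact hxy
  have h2 : n = 0 := by
    have h3 : |n| < 1 := by exact_mod_cast h1
    have h4 := abs_lt.mp h3
    omega
  have : x - y = 0 := by rw [← hcast, h2]; simp
  linarith

lemma coe_sub_one (x : ℝ) : ((x - 1 : ℝ) : Circle1) = x := by
  rw [QuotientAddGroup.eq_iff_sub_mem]
  exact AddSubgroup.mem_zmultiples_iff.mpr ⟨-1, by simp⟩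

lemma compl_preconn {S : Set Circle1} (hS : IsPreconnected S) {a : Circle1} (ha : a ∉ S) :
    IsPreconnected Sᶜ := by
  rcases S.eq_empty_or_nonempty with rfl | hne
  · simpa using isPreconnected_univ
  obtain ⟨r, rfl⟩ : ∃ r : ℝ, (r : Circle1) = a := Quotient.exists_rep a
  set T : Set ℝ := {x | x ∈ Ioo r (r+1) ∧ (x : Circle1) ∈ S} with hTdef
  obtain ⟨s, hs⟩ := hne
  obtain ⟨x0, hx0, hx0s⟩ := rep_exists r s
  have hx0r : x0 ≠ r := by rintro rfl; exact ha (hx0s ▸ hs)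
  have hx0T : x0 ∈ T := ⟨⟨lt_of_le_of_ne hx0.1 (Ne.symm hx0r), hx0.2⟩, hx0s ▸ hs⟩
  have hord : ∀ x ∈ T, ∀ z ∈ T, Icc x z ⊆ T := by
    rintro x ⟨hxI, hxS⟩ z ⟨hzI, hzS⟩ y ⟨hxy, hyz⟩
    have hyI : y ∈ Ioo r (r+1) := ⟨lt_of_lt_of_le hxI.1 hxy, lt_of_le_of_lt hyz hzI.2⟩
    refine ⟨hyI, ?_⟩
    by_contra hyS
    have hUopen : IsOpen (((↑) : ℝ → Circle1) '' Ioo r y) :=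
      QuotientAddGroup.isOpenMap_coe _ isOpen_Ioo
    have hVopen : IsOpen (((↑) : ℝ → Circle1) '' Ioo y (r+1)) :=
      QuotientAddGroup.isOpenMap_coe _ isOpen_Ioo
    have hcover : S ⊆ ((↑) : ℝ → Circle1) '' Ioo r y ∪ ((↑) : ℝ → Circle1) '' Ioo y (r+1) := by
      intro w hw
      obtain ⟨u, huI, huw⟩ := rep_exists r w
      have hur : u ≠ r := by rintro rfl; exact ha (huw ▸ hw)
      have huy : u ≠ y := by rintro rfl; exact hyS (huw ▸ hw)
      rcases lt_or_gt_of_ne huy with h | h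
      · exact Or.inl ⟨u, ⟨lt_of_le_of_ne huI.1 (Ne.symm hur), h⟩, huw⟩
      · exact Or.inr ⟨u, ⟨h, huI.2⟩, huw⟩
    have hxy' : x < y := lt_of_le_of_ne hxy (fun h => hyS (h ▸ hxS))
    have hyz' : y < z := lt_of_le_of_ne hyz (fun h => hyS (h ▸ hzS))
    obtain ⟨w, -, ⟨u, huI, huw⟩, ⟨v, hvI, hvw⟩⟩ :=
      hS _ _ hUopen hVopen hcover ⟨_, hxS, ⟨x, ⟨hxI.1, hxy'⟩, rfl⟩⟩
        ⟨_, hzS, ⟨z, ⟨hyz', hzI.2⟩, rfl⟩⟩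
    have huv : u = v := by
      apply coe_inj (huw.trans hvw.symm)
      rw [abs_sub_lt_iff]
      constructor <;> [linarith [huI.2, hvI.1, hyI.1, hyI.2]; linarith [huI.1, hvI.2, hyI.1, hyI.2]]
    rw [huv] at huI
    exact absurd huI.2 (not_lt.mpr (le_of_lt hvI.1))
  have hbddA : BddAbove T := ⟨r+1, fun t ht => le_of_lt ht.1.2⟩
  have hbddB : BddBelow T := ⟨r, fun t ht => le_of_lt ht.1.1⟩
  have hTne : T.Nonempty := ⟨x0, hx0T⟩
  set α := sInf T with hα
  set β := sSup T with hβ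
  have hrα : r ≤ α := le_csInf hTne fun t ht => le_of_lt ht.1.1
  have hβr : β ≤ r + 1 := csSup_le hTne fun t ht => le_of_lt ht.1.2
  have hαx0 : α ≤ x0 := csInf_le hbddB hx0T
  have hx0β : x0 ≤ β := le_csSup hbddA hx0T
  have hrβ : r < β := lt_of_lt_of_le hx0T.1.1 hx0β
  have hαr1 : α < r + 1 := lt_of_le_of_lt hαx0 hx0T.1.2
  have hIooT : Ioo α β ⊆ T := by
    intro x hx
    obtain ⟨u, huT, hux⟩ := (csInf_lt_iff hbddB hTne).mp hx.1
    obtain ⟨v, hvT, hxv⟩ := (lt_csSup_iff hbddA hTne).mp hx.2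
    exact hord u huT v hvT ⟨le_of_lt hux, le_of_lt hxv⟩
  set Q : Set ℝ := {x | x ∈ Icc β (α+1) ∧ (x : Circle1) ∉ S} with hQdef
  have hβα1 : β ≤ α + 1 := by linarith
  have hQIoo : Ioo β (α+1) ⊆ Q := by
    intro x hx
    refine ⟨Ioo_subset_Icc_self hx, ?_⟩
    intro hxS
    rcases lt_trichotomy x (r+1) with h | h | h
    · have hxT : x ∈ T := ⟨⟨by linarith [hx.1], h⟩, hxS⟩
      exact absurd (le_csSup hbddA hxT) (not_le.mpr hx.1)
    · apply ha
      have hr1 : ((r : ℝ) : Circle1) = ((r+1 : ℝ) : Circle1) := by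
        have h' := coe_sub_one (r+1)
        rwa [show r + 1 - 1 = r by ring] at h'
      rw [h] at hxS
      rwa [hr1]
    · have hx1T : x - 1 ∈ T := by
        refine ⟨⟨by linarith, by linarith [hx.2, hαr1]⟩, ?_⟩
        rw [coe_sub_one]; exact hxS
      have : α ≤ x - 1 := csInf_le hbddB hx1T
      linarith [hx.2]
  have hQpre : IsPreconnected Q := by
    rcases eq_or_lt_of_le hβα1 with h | h
    · have hsub : Q.Subsingleton := by
        intro x hx y hy
        have hx' := hx.1; have hy' := hy.1
        rw [← h] at hx' hy'
        have hxb : x = β := le_antisymm hx'.2 hx'.1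
        have hyb : y = β := le_antisymm hy'.2 hy'.1
        rw [hxb, hyb]
      exact hsub.isPreconnected
    · refine isPreconnected_Ioo.subset_closure hQIoo ?_
      rw [closure_Ioo (ne_of_lt h)]
      exact fun x hx => hx.1
  have hSc : Sᶜ = ((↑) : ℝ → Circle1) '' Q := by
    apply Subset.antisymm
    · intro w hw
      obtain ⟨x, hxI, hxw⟩ := rep_exists β w
      have hxle : x ≤ α + 1 := by
        by_contra hcon
        push_neg at hcon
        have hmem : x - 1 ∈ Ioo α β := ⟨by linarith, by linarith [hxI.2]⟩
        have hT' := hIooT hmem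
        apply hw
        rw [← hxw, ← coe_sub_one]
        exact hT'.2
      exact ⟨x, ⟨⟨hxI.1, hxle⟩, fun hs => hw (hxw ▸ hs)⟩, hxw⟩
    · rintro w ⟨x, hx, rfl⟩
      exact hx.2
  rw [hSc]
  exact hQpre.image _ continuous_quotient_mk'.continuousOn

lemma dir (A B : Set Circle1) (hB : B.Finite) (hAB : Disjoint A B) :
    SetUnlinked A B → SetUnlinked B A := by
  rintro ⟨z, hz, hBC⟩
  rcases A.eq_empty_or_nonempty with rfl | ⟨a, haA⟩
  · obtain ⟨w, hw⟩ := hB.infinite_compl.nonempty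
    exact ⟨w, hw, empty_subset _⟩
  · have hCsub : connectedComponentIn (Aᶜ) z ⊆ Aᶜ := connectedComponentIn_subset _ _
    have haC : a ∉ connectedComponentIn (Aᶜ) z := fun h => hCsub h haA
    have hpre : IsPreconnected (connectedComponentIn (Aᶜ) z)ᶜ :=
      compl_preconn isPreconnected_connectedComponentIn haC
    have haB : a ∈ Bᶜ := fun h => disjoint_left.mp hAB haA h
    refine ⟨a, haB, ?_⟩
    have h1 : (connectedComponentIn (Aᶜ) z)ᶜ ⊆ Bᶜ := compl_subset_compl.mpr hBC
    have h2 := hpre.subset_connectedComponentIn haC h1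
    exact (subset_compl_comm.mp hCsub).trans h2

end SetUnlinkedAux

/-- Two disjoint finite subsets `A, B` of the circle `ℝ/ℤ` are unlinked if and only if `A`
is contained in a single connected component of `(ℝ/ℤ) \ B`. -/
theorem setUnlinked_comm (A B : Set Circle1) (hA : A.Finite) (hB : B.Finite)
    (hAB : Disjoint A B) : SetUnlinked A B ↔ SetUnlinked B A :=
  ⟨SetUnlinkedAux.dir A B hB hAB, SetUnlinkedAux.dir B A hA hAB.symm⟩
end

section
/- Two disjoint finite subsets A, B of the unit circle are unlinked if and only if the Euclidean convex hulls of A and B in ℂ (identifying ℝ/ℤ with the unit circle via θ ↦ exp(2πiθ)) are disjoint. -/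
open Set Topology

/-- The identification of `ℝ/ℤ` with the unit circle in `ℂ`, `θ ↦ exp (2πiθ)`. -/
noncomputable def circleEmbed (θ : Circle1) : ℂ := (AddCircle.toCircle θ : ℂ)

namespace CU

open Complex

private lemma dkey (u v : ℂ) :
    exp (2*u*Complex.I) - exp (2*v*Complex.I)
      = exp ((u+v)*Complex.I) * (2*Complex.sin (u-v)*Complex.I) := by
  have h1 : exp (2*u*Complex.I) = exp ((u+v)*Complex.I) * exp ((u-v)*Complex.I) := by
    rw [← exp_add]; ring_nf
  have h2 : exp (2*v*Complex.I) = exp ((u+v)*Complex.I) * exp ((v-u)*Complex.I) := by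
    rw [← exp_add]; ring_nf
  have hv : v - u = -(u-v) := by ring
  rw [h1, h2, ← mul_sub, hv, exp_mul_I, exp_mul_I, exp_mul_I, Complex.sin_neg, Complex.cos_neg]
  ring

private lemma ckey (x y z : ℂ) :
    (exp (2*x*Complex.I) - exp (2*y*Complex.I)) * (exp (2*(-z)*Complex.I) - exp (2*(-y)*Complex.I))
      = 4 * Complex.sin (x - y) * Complex.sin (z - y) * exp ((x - z)*Complex.I) := by
  rw [dkey, dkey]
  have h1 : exp ((x+y)*Complex.I) * exp ((-z + -y)*Complex.I) = exp ((x-z)*Complex.I) := by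
    rw [← exp_add]; ring_nf
  have h2 : (-z : ℂ) - -y = -(z - y) := by ring
  calc exp ((x+y)*Complex.I) * (2*Complex.sin (x-y)*Complex.I)
        * (exp ((-z + -y)*Complex.I) * (2*Complex.sin (-z - -y)*Complex.I))
      = (exp ((x+y)*Complex.I) * exp ((-z + -y)*Complex.I))
        * (4 * Complex.sin (x-y) * Complex.sin (-z - -y)) * (Complex.I^2) := by
        ring
    _ = 4 * Complex.sin (x - y) * Complex.sin (z - y) * exp ((x - z)*Complex.I) := by
        rw [h1, h2, Complex.sin_neg, Complex.I_sq]; ring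

/-- `θ ↦ exp (2πiθ)` as a map `ℝ → ℂ`. -/
noncomputable def eC (θ : ℝ) : ℂ := Complex.exp (2 * Real.pi * θ * Complex.I)

lemma eC_ofReal (θ : ℝ) : eC θ = exp (2 * ((Real.pi * θ : ℝ) : ℂ) * Complex.I) := by
  rw [eC]; push_cast; ring_nf

lemma conj_eC (θ : ℝ) :
    (starRingEnd ℂ) (eC θ) = exp (2 * (-((Real.pi * θ : ℝ) : ℂ)) * Complex.I) := by
  rw [eC_ofReal, ← Complex.exp_conj]
  congr 1
  simp only [map_mul, Complex.conj_I, Complex.conj_ofReal, map_ofNat]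
  ring

lemma eC_add_one (θ : ℝ) : eC (θ + 1) = eC θ := by
  have h : 2 * (Real.pi:ℂ) * (↑θ + 1) * Complex.I
      = 2*(Real.pi:ℂ)*θ*Complex.I + 2*(Real.pi:ℂ)*Complex.I := by ring
  rw [eC, eC]; push_cast; rw [h, Complex.exp_add, Complex.exp_two_pi_mul_I, mul_one]

/-- The affine functional vanishing on the line through `P` in direction `W`. -/
noncomputable def lf (P W z : ℂ) : ℝ := ((z - P) * (starRingEnd ℂ) W).im

lemma key (s t θ : ℝ) : lf (eC s) (eC t - eC s) (eC θ)
    = 4 * Real.sin (Real.pi*(θ-s)) * Real.sin (Real.pi*(t-s)) * Real.sin (Real.pi*(θ-t)) := by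
  have h : (eC θ - eC s) * (starRingEnd ℂ) (eC t - eC s)
      = 4 * Complex.sin (((Real.pi*θ:ℝ):ℂ) - ((Real.pi*s:ℝ):ℂ))
        * Complex.sin (((Real.pi*t:ℝ):ℂ) - ((Real.pi*s:ℝ):ℂ))
        * exp ((((Real.pi*θ:ℝ):ℂ) - ((Real.pi*t:ℝ):ℂ))*Complex.I) := by
    rw [map_sub, conj_eC, conj_eC, eC_ofReal, eC_ofReal]
    exact ckey _ _ _
  show ((eC θ - eC s) * (starRingEnd ℂ) (eC t - eC s)).im = _
  rw [h]
  have e1 : (((Real.pi*θ:ℝ):ℂ) - ((Real.pi*s:ℝ):ℂ)) = ((Real.pi*(θ-s):ℝ):ℂ) := by push_cast; ring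
  have e2 : (((Real.pi*t:ℝ):ℂ) - ((Real.pi*s:ℝ):ℂ)) = ((Real.pi*(t-s):ℝ):ℂ) := by push_cast; ring
  have e3 : (((Real.pi*θ:ℝ):ℂ) - ((Real.pi*t:ℝ):ℂ)) = ((Real.pi*(θ-t):ℝ):ℂ) := by push_cast; ring
  rw [e1, e2, e3, ← Complex.ofReal_sin, ← Complex.ofReal_sin, Complex.exp_mul_I,
    ← Complex.ofReal_sin, ← Complex.ofReal_cos]
  simp only [Complex.mul_im, Complex.mul_re, Complex.add_im, Complex.add_re,
    Complex.ofReal_re, Complex.ofReal_im, Complex.I_re, Complex.I_im,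
    Complex.re_ofNat, Complex.im_ofNat]
  ring

lemma lf_seg (P W x y : ℂ) (r : ℝ) :
    lf P W (x + r • (y - x)) = lf P W x + r * (lf P W y - lf P W x) := by
  simp only [lf, Complex.real_smul]
  simp only [Complex.mul_im, Complex.sub_re, Complex.sub_im, Complex.add_re, Complex.add_im,
    Complex.mul_re, Complex.ofReal_re, Complex.ofReal_im]
  ring

lemma lf_linear (W : ℂ) : IsLinearMap ℝ (fun z : ℂ => (z * (starRingEnd ℂ) W).im) := by
  constructor
  · intro x y; simp only [add_mul, Complex.add_im]
  · intro r x
    simp only [Complex.real_smul, smul_eq_mul]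
    simp only [Complex.mul_im, Complex.mul_re, Complex.ofReal_re, Complex.ofReal_im]
    ring

lemma lf_eq (P W z : ℂ) : lf P W z = (z * (starRingEnd ℂ) W).im - (P * (starRingEnd ℂ) W).im := by
  simp only [lf, sub_mul, Complex.sub_im]

lemma convex_lf_lt (P W : ℂ) : Convex ℝ {z : ℂ | lf P W z < 0} := by
  have h : {z : ℂ | lf P W z < 0}
      = {z : ℂ | (z * (starRingEnd ℂ) W).im < (P * (starRingEnd ℂ) W).im} := by
    ext z; simp [lf_eq, sub_neg]
  rw [h]
  exact convex_halfSpace_lt (lf_linear W) _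

lemma convex_lf_ge (P W : ℂ) : Convex ℝ {z : ℂ | 0 ≤ lf P W z} := by
  have h : {z : ℂ | 0 ≤ lf P W z}
      = {z : ℂ | (P * (starRingEnd ℂ) W).im ≤ (z * (starRingEnd ℂ) W).im} := by
    ext z; simp [lf_eq, sub_nonneg]
  rw [h]
  exact convex_halfSpace_ge (lf_linear W) _

lemma circleEmbed_coe (θ : ℝ) : circleEmbed (θ : Circle1) = eC θ := by
  rw [circleEmbed, AddCircle.toCircle_apply_mk, Circle.coe_exp, eC]
  norm_num

lemma infinite_circle1 : Infinite Circle1 := by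
  have h1 : (Set.Ico (0:ℝ) (0+1)).Infinite := Set.Ico_infinite (by norm_num)
  haveI : Infinite (Set.Ico (0:ℝ) (0+1)) := Set.infinite_coe_iff.mpr h1
  exact Infinite.of_surjective (AddCircle.equivIco (1:ℝ) 0)
    (AddCircle.equivIco (1:ℝ) 0).surjective

/-- The chord separation lemma. -/
lemma sep_lemma (A B : Set Circle1) (U V : ℝ) (hUV : U < V) (hV1 : V < U + 1)
    (hBarc : B ⊆ (fun x : ℝ => (x : Circle1)) '' Ioo U V)
    (hAarc : ∀ a ∈ A, a ∉ (fun x : ℝ => (x : Circle1)) '' Ioo U V) :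
    Disjoint (convexHull ℝ (circleEmbed '' A)) (convexHull ℝ (circleEmbed '' B)) := by
  have pi_pos := Real.pi_pos
  have hBsub : circleEmbed '' B ⊆ {z : ℂ | lf (eC U) (eC V - eC U) z < 0} := by
    rintro _ ⟨b, hb, rfl⟩
    obtain ⟨θ, hθ, rfl⟩ := hBarc hb
    show lf (eC U) (eC V - eC U) (circleEmbed ((θ : ℝ) : Circle1)) < 0
    rw [circleEmbed_coe]
    have hkey : lf (eC U) (eC V - eC U) (eC θ)
        = 4 * Real.sin (Real.pi*(θ-U)) * Real.sin (Real.pi*(V-U)) * Real.sin (Real.pi*(θ-V)) :=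
      key U V θ
    have s1 : 0 < Real.sin (Real.pi*(θ-U)) := by
      apply Real.sin_pos_of_pos_of_lt_pi <;> nlinarith [hθ.1, hθ.2]
    have s2 : 0 < Real.sin (Real.pi*(V-U)) := by
      apply Real.sin_pos_of_pos_of_lt_pi <;> nlinarith
    have s3 : Real.sin (Real.pi*(θ-V)) < 0 := by
      apply Real.sin_neg_of_neg_of_neg_pi_lt <;> nlinarith [hθ.1, hθ.2]
    rw [hkey]
    nlinarith [mul_pos s1 s2, mul_neg_of_pos_of_neg (mul_pos s1 s2) s3]
  have hAsub : circleEmbed '' A ⊆ {z : ℂ | 0 ≤ lf (eC U) (eC V - eC U) z} := by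
    rintro _ ⟨a, ha, rfl⟩
    obtain ⟨x, rfl⟩ := QuotientAddGroup.mk_surjective a
    have hmem : toIcoMod (zero_lt_one) V x ∈ Ico V (V + 1) := toIcoMod_mem_Ico zero_lt_one V x
    set θ := toIcoMod (zero_lt_one) V x with hθdef
    have hcoe : ((θ : ℝ) : Circle1) = (x : Circle1) := by
      rw [QuotientAddGroup.eq_iff_sub_mem, toIcoMod_sub_self]
      exact AddSubgroup.zsmul_mem_zmultiples _ _
    have hle : θ ≤ U + 1 := by
      by_contra hgt
      push_neg at hgt
      apply hAarc _ ha
      refine ⟨θ - 1, ⟨by linarith, by linarith [hmem.2]⟩, ?_⟩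
      have h7 : ((θ - 1 + 1 : ℝ) : Circle1) = ((θ - 1 : ℝ) : Circle1) :=
        AddCircle.coe_add_period 1 (θ - 1)
      simp only [sub_add_cancel] at h7
      show ((θ - 1 : ℝ) : Circle1) = (x : Circle1)
      rw [← h7]
      exact hcoe
    show 0 ≤ lf (eC U) (eC V - eC U) (circleEmbed ((x : ℝ) : Circle1))
    rw [← hcoe, circleEmbed_coe]
    have hkey : lf (eC U) (eC V - eC U) (eC θ)
        = 4 * Real.sin (Real.pi*(θ-U)) * Real.sin (Real.pi*(V-U)) * Real.sin (Real.pi*(θ-V)) :=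
      key U V θ
    have s1 : 0 ≤ Real.sin (Real.pi*(θ-U)) := by
      apply Real.sin_nonneg_of_nonneg_of_le_pi <;> nlinarith [hmem.1]
    have s2 : 0 < Real.sin (Real.pi*(V-U)) := by
      apply Real.sin_pos_of_pos_of_lt_pi <;> nlinarith
    have s3 : 0 ≤ Real.sin (Real.pi*(θ-V)) := by
      apply Real.sin_nonneg_of_nonneg_of_le_pi <;> nlinarith [hmem.1, hmem.2]
    rw [hkey]
    nlinarith [mul_nonneg (mul_nonneg s1 s2.le) s3]
  have hullA : convexHull ℝ (circleEmbed '' A) ⊆ {z : ℂ | 0 ≤ lf (eC U) (eC V - eC U) z} :=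
    convexHull_min hAsub (convex_lf_ge _ _)
  have hullB : convexHull ℝ (circleEmbed '' B) ⊆ {z : ℂ | lf (eC U) (eC V - eC U) z < 0} :=
    convexHull_min hBsub (convex_lf_lt _ _)
  rw [Set.disjoint_left]
  intro z hzA hzB
  have h1 := hullA hzA
  have h2 := hullB hzB
  simp only [mem_setOf_eq] at h1 h2
  linarith

/-- Abstract crossing lemma: two segments whose endpoints strictly separate each other
with respect to the corresponding affine functionals must intersect. -/
lemma cross_core (es et ea eb : ℂ)
    (hpa : lf es (et - es) ea < 0) (hpb : 0 < lf es (et - es) eb)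
    (hps : 0 < lf ea (eb - ea) es) (hpt : lf ea (eb - ea) et < 0) :
    ∃ x : ℂ, x ∈ segment ℝ ea eb ∧ x ∈ segment ℝ es et := by
  set p := lf es (et - es) ea with hpd
  set q := lf es (et - es) eb with hqd
  have hpq : p - q < 0 := by linarith
  set c : ℝ := p / (p - q) with hcdef
  have hcmul : c * (p - q) = p := by
    rw [hcdef]
    exact div_mul_cancel₀ p (ne_of_lt hpq)
  have hc0 : 0 ≤ c := by nlinarith
  have hc1 : c ≤ 1 := by nlinarith
  have hxseg : ea + c • (eb - ea) ∈ segment ℝ ea eb := by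
    rw [segment_eq_image']
    exact ⟨c, ⟨hc0, hc1⟩, rfl⟩
  have hgx : lf es (et - es) (ea + c • (eb - ea)) = 0 := by
    rw [lf_seg, ← hpd, ← hqd]
    linear_combination -hcmul
  have hWne : et - es ≠ 0 := by
    intro h0
    rw [hpd, h0] at hpa
    simp [lf] at hpa
  have hnsq : Complex.normSq (et - es) ≠ 0 := (Complex.normSq_pos.mpr hWne).ne'
  set k : ℝ := ((ea + c • (eb - ea) - es) * (starRingEnd ℂ) (et - es)).re with hkdef
  have hprod : (ea + c • (eb - ea) - es) * (starRingEnd ℂ) (et - es) = (k : ℂ) := by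
    apply Complex.ext
    · rw [Complex.ofReal_re, hkdef]
    · rw [Complex.ofReal_im]
      exact hgx
  have h5 : (ea + c • (eb - ea) - es) * ((Complex.normSq (et - es) : ℝ) : ℂ)
      = (k : ℂ) * (et - es) := by
    rw [← Complex.mul_conj]
    linear_combination (et - es) * hprod
  have h6 : (((k / Complex.normSq (et - es)) : ℝ) : ℂ) * (et - es)
      = ea + c • (eb - ea) - es := by
    rw [Complex.ofReal_div, div_mul_eq_mul_div, div_eq_iff (by exact_mod_cast hnsq)]
    linear_combination -h5
  have hxline : ea + c • (eb - ea) = es + (k / Complex.normSq (et - es)) • (et - es) := by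
    rw [show ((k / Complex.normSq (et - es)) • (et - es) : ℂ)
        = ((k / Complex.normSq (et - es) : ℝ) : ℂ) * (et - es) from Complex.real_smul .., h6]
    ring
  set r : ℝ := k / Complex.normSq (et - es) with hrdef
  -- the functional along the other chord vanishes at our point
  have hhα : lf ea (eb - ea) ea = 0 := by simp [lf]
  have hhβ : lf ea (eb - ea) eb = 0 := by
    show ((eb - ea) * (starRingEnd ℂ) (eb - ea)).im = 0
    rw [Complex.mul_conj]
    exact Complex.ofReal_im _
  have hhx : lf ea (eb - ea) (ea + c • (eb - ea)) = 0 := by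
    rw [lf_seg, hhα, hhβ]
    ring
  have hhx2 : lf ea (eb - ea) es + r * (lf ea (eb - ea) et - lf ea (eb - ea) es) = 0 := by
    rw [← lf_seg, ← hxline]
    exact hhx
  have hr0 : 0 ≤ r := by nlinarith
  have hr1 : r ≤ 1 := by nlinarith
  refine ⟨ea + c • (eb - ea), hxseg, ?_⟩
  rw [segment_eq_image']
  exact ⟨r, ⟨hr0, hr1⟩, hxline.symm⟩

/-- The crossing-chords lemma for points on the circle. -/
lemma cross_lemma (s t α β : ℝ) (h1 : s < α) (h2 : α < t) (h3 : t < β)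
    (h4 : β < s + 1) :
    ∃ x : ℂ, x ∈ segment ℝ (eC α) (eC β) ∧ x ∈ segment ℝ (eC s) (eC t) := by
  have pi_pos := Real.pi_pos
  apply cross_core
  · -- lf (eC s) (eC t - eC s) (eC α) < 0
    rw [key s t α]
    have s1 : 0 < Real.sin (Real.pi*(α-s)) := by
      apply Real.sin_pos_of_pos_of_lt_pi <;> nlinarith
    have s2 : 0 < Real.sin (Real.pi*(t-s)) := by
      apply Real.sin_pos_of_pos_of_lt_pi <;> nlinarith
    have s3 : Real.sin (Real.pi*(α-t)) < 0 := by
      apply Real.sin_neg_of_neg_of_neg_pi_lt <;> nlinarith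
    nlinarith [mul_pos s1 s2, mul_neg_of_pos_of_neg (mul_pos s1 s2) s3]
  · -- 0 < lf (eC s) (eC t - eC s) (eC β)
    rw [key s t β]
    have s1 : 0 < Real.sin (Real.pi*(β-s)) := by
      apply Real.sin_pos_of_pos_of_lt_pi <;> nlinarith
    have s2 : 0 < Real.sin (Real.pi*(t-s)) := by
      apply Real.sin_pos_of_pos_of_lt_pi <;> nlinarith
    have s3 : 0 < Real.sin (Real.pi*(β-t)) := by
      apply Real.sin_pos_of_pos_of_lt_pi <;> nlinarith
    nlinarith [mul_pos (mul_pos s1 s2) s3]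
  · -- 0 < lf (eC α) (eC β - eC α) (eC s)
    have h8 : eC s = eC (s+1) := (eC_add_one s).symm
    rw [h8, key α β (s+1)]
    have s1 : 0 < Real.sin (Real.pi*(s+1-α)) := by
      apply Real.sin_pos_of_pos_of_lt_pi <;> nlinarith
    have s2 : 0 < Real.sin (Real.pi*(β-α)) := by
      apply Real.sin_pos_of_pos_of_lt_pi <;> nlinarith
    have s3 : 0 < Real.sin (Real.pi*(s+1-β)) := by
      apply Real.sin_pos_of_pos_of_lt_pi <;> nlinarith
    nlinarith [mul_pos (mul_pos s1 s2) s3]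
  · -- lf (eC α) (eC β - eC α) (eC t) < 0
    rw [key α β t]
    have s1 : 0 < Real.sin (Real.pi*(t-α)) := by
      apply Real.sin_pos_of_pos_of_lt_pi <;> nlinarith
    have s2 : 0 < Real.sin (Real.pi*(β-α)) := by
      apply Real.sin_pos_of_pos_of_lt_pi <;> nlinarith
    have s3 : Real.sin (Real.pi*(t-β)) < 0 := by
      apply Real.sin_neg_of_neg_of_neg_pi_lt <;> nlinarith
    nlinarith [mul_pos s1 s2, mul_neg_of_pos_of_neg (mul_pos s1 s2) s3]

end CU

open CU

/-- Two disjoint finite subsets `A`, `B` of `ℝ/ℤ` are unlinked if and only if the Euclidean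
convex hulls in `ℂ` of their images under `θ ↦ exp (2πiθ)` are disjoint. -/
theorem setUnlinked_iff_disjoint_convexHull (A B : Set Circle1)
    (hA : A.Finite) (hB : B.Finite) (hAB : Disjoint A B) :
    SetUnlinked A B ↔
      Disjoint (convexHull ℝ (circleEmbed '' A)) (convexHull ℝ (circleEmbed '' B)) := by
  constructor
  · -- unlinked implies disjoint hulls
    rintro ⟨z, hz, hBC⟩
    rcases eq_empty_or_nonempty A with rfl | ⟨a₀, ha₀⟩
    · simp
    rcases eq_empty_or_nonempty B with rfl | hBne
    · simp
    obtain ⟨α₀, hα₀⟩ := QuotientAddGroup.mk_surjective a₀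
    set C := connectedComponentIn Aᶜ z with hCdef
    set ψ : Circle1 → ℝ :=
      fun θ => ((AddCircle.equivIco (1:ℝ) 0 (θ - a₀) : Set.Ico (0:ℝ) (0+1)) : ℝ) with hψ
    have ψ_mem : ∀ θ : Circle1, ψ θ ∈ Ico (0:ℝ) 1 := by
      intro θ
      have h := (AddCircle.equivIco (1:ℝ) 0 (θ - a₀)).2
      refine ⟨h.1, ?_⟩
      have h2 := h.2
      linarith
    have ψ_spec : ∀ θ : Circle1, ((ψ θ : ℝ) : Circle1) = θ - a₀ := by
      intro θ
      exact (AddCircle.equivIco (1:ℝ) 0).symm_apply_apply (θ - a₀)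
    have ψ_inj : ∀ θ₁ θ₂ : Circle1, ψ θ₁ = ψ θ₂ → θ₁ = θ₂ := by
      intro θ₁ θ₂ h
      have h1 := ψ_spec θ₁
      have h2 := ψ_spec θ₂
      rw [h] at h1
      rw [h1] at h2
      exact sub_left_injective h2
    have ψ_pos : ∀ θ : Circle1, θ ≠ a₀ → 0 < ψ θ := by
      intro θ hθ
      rcases lt_or_eq_of_le (ψ_mem θ).1 with h | h
      · exact h
      exfalso
      apply hθ
      have h1 := ψ_spec θ
      rw [← h] at h1
      have h0 : ((0:ℝ) : Circle1) = 0 := by norm_num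
      rw [h0] at h1
      have := sub_eq_zero.mp h1.symm
      exact this
    have hCsub : C ⊆ Aᶜ := connectedComponentIn_subset _ _
    have hBC' : B ⊆ C := hBC
    -- continuity of ψ away from a₀ and connectedness of ψ '' C
    have hJconn : IsPreconnected (ψ '' C) := by
      apply IsPreconnected.image isPreconnected_connectedComponentIn
      intro x hxC
      apply ContinuousAt.continuousWithinAt
      have hxa : x ≠ a₀ := by
        intro h
        exact hCsub hxC (h ▸ ha₀)
      have h1 : ContinuousAt (fun w : Circle1 => w - a₀) x :=
        (continuous_id.sub continuous_const).continuousAt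
      have h2 : ContinuousAt (AddCircle.equivIco (1:ℝ) 0) (x - a₀) := by
        apply AddCircle.continuousAt_equivIco
        intro h
        apply hxa
        have h0 : ((0:ℝ) : Circle1) = 0 := by norm_num
        rw [h0] at h
        exact sub_eq_zero.mp h
      exact continuous_subtype_val.continuousAt.comp
        (ContinuousAt.comp (f := fun w : Circle1 => w - a₀) h2 h1)
    have hψBne : (ψ '' B).Nonempty := hBne.image ψ
    have hψBfin : (ψ '' B).Finite := hB.image ψ
    set m := sInf (ψ '' B) with hmdef
    set M := sSup (ψ '' B) with hMdef
    have hm_mem : m ∈ ψ '' B := hψBne.csInf_mem hψBfin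
    have hM_mem : M ∈ ψ '' B := hψBne.csSup_mem hψBfin
    have hψB_pos : ∀ x ∈ ψ '' B, 0 < x ∧ x < 1 := by
      rintro _ ⟨b, hb, rfl⟩
      refine ⟨ψ_pos b ?_, (ψ_mem b).2⟩
      intro h
      exact Set.disjoint_left.mp hAB ha₀ (h ▸ hb)
    have hm_pos : 0 < m := (hψB_pos m hm_mem).1
    have hM_lt : M < 1 := (hψB_pos M hM_mem).2
    have hmM : m ≤ M := csInf_le_csSup hψBne hψBfin.bddBelow hψBfin.bddAbove
    set S := ψ '' (A \ {a₀}) with hSdef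
    have hSfin : S.Finite := (hA.subset Set.diff_subset).image ψ
    have hS_pos : ∀ x ∈ S, 0 < x := by
      rintro _ ⟨a, ha, rfl⟩
      exact ψ_pos a ha.2
    have tri : ∀ x ∈ S, x < m ∨ M < x := by
      rintro _ ⟨a, ha, rfl⟩
      by_contra hcon
      push_neg at hcon
      have hmJ : m ∈ ψ '' C := by
        obtain ⟨b, hb, hbe⟩ := hm_mem
        exact ⟨b, hBC' hb, hbe⟩
      have hMJ : M ∈ ψ '' C := by
        obtain ⟨b, hb, hbe⟩ := hM_mem
        exact ⟨b, hBC' hb, hbe⟩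
      have hmem : ψ a ∈ ψ '' C :=
        (hJconn.ordConnected).out hmJ hMJ ⟨hcon.1, hcon.2⟩
      obtain ⟨w, hwC, hwe⟩ := hmem
      have : w = a := ψ_inj w a hwe
      subst this
      exact hCsub hwC ha.1
    set Su := insert (m/2) {x ∈ S | x < m} with hSudef
    have hSufin : Su.Finite := (hSfin.subset (Set.sep_subset _ _)).insert _
    set u := sSup Su with hudef
    have hu_mem : u ∈ Su := (Set.insert_nonempty _ _).csSup_mem hSufin
    have hu_ub : ∀ y ∈ Su, y ≤ u := fun y hy => le_csSup hSufin.bddAbove hy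
    have hum : u < m := by
      rcases hu_mem with h | h
      · rw [h]; linarith
      · exact h.2
    have hu_pos : 0 < u := by
      rcases hu_mem with h | h
      · rw [h]; linarith
      · exact hS_pos u h.1
    set Sv := insert ((M+1)/2) {x ∈ S | M < x} with hSvdef
    have hSvfin : Sv.Finite := (hSfin.subset (Set.sep_subset _ _)).insert _
    set v := sInf Sv with hvdef
    have hv_mem : v ∈ Sv := (Set.insert_nonempty _ _).csInf_mem hSvfin
    have hv_lb : ∀ y ∈ Sv, v ≤ y := fun y hy => csInf_le hSvfin.bddBelow hy
    have hMv : M < v := by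
      rcases hv_mem with h | h
      · rw [h]; linarith
      · exact h.2
    have hv_lt : v < 1 := by
      have := hv_lb ((M+1)/2) (Set.mem_insert _ _)
      linarith
    have huv : u < v := by linarith
    apply sep_lemma A B (α₀ + u) (α₀ + v) (by linarith) (by linarith)
    · -- B inside the arc
      intro b hb
      have hbu : u < ψ b := lt_of_lt_of_le hum (csInf_le hψBfin.bddBelow ⟨b, hb, rfl⟩)
      have hbv : ψ b < v := lt_of_le_of_lt (le_csSup hψBfin.bddAbove ⟨b, hb, rfl⟩) hMv
      refine ⟨α₀ + ψ b, ⟨by linarith, by linarith⟩, ?_⟩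
      show ((α₀ + ψ b : ℝ) : Circle1) = b
      have h1 : ((α₀ + ψ b : ℝ) : Circle1) = (α₀ : Circle1) + ((ψ b : ℝ) : Circle1) := rfl
      rw [h1, hα₀, ψ_spec b]
      exact add_sub_cancel a₀ b
    · -- A avoids the arc
      rintro a haA ⟨x, hx, hxa⟩
      have h1 : ((x - α₀ : ℝ) : Circle1) = a - a₀ := by
        have : ((x - α₀ : ℝ) : Circle1) = (x : Circle1) - (α₀ : Circle1) := rfl
        rw [this, hα₀]
        show (x : Circle1) - a₀ = a - a₀
        rw [show ((x : ℝ) : Circle1) = a from hxa]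
      have hx1 : x - α₀ ∈ Ico (0:ℝ) 1 := ⟨by cases hx; linarith, by cases hx; linarith⟩
      have h2 : ψ a = x - α₀ := by
        have h3 : ((ψ a : ℝ) : Circle1) = ((x - α₀ : ℝ) : Circle1) := by
          rw [ψ_spec a, h1]
        rw [AddCircle.coe_eq_coe_iff_of_mem_Ico (a := (0:ℝ))
          (by rw [zero_add]; exact ψ_mem a) (by rw [zero_add]; exact hx1)] at h3
        exact h3
      have hau : u < ψ a := by rw [h2]; cases hx; linarith
      have hav : ψ a < v := by rw [h2]; cases hx; linarith
      by_cases hne : a = a₀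
      · subst hne
        have : (0:ℝ) < ψ a := lt_trans hu_pos hau
        have h4 := ψ_pos a
        -- ψ a₀ = 0 contradiction: derive ψ a = 0
        have h5 : ((ψ a : ℝ) : Circle1) = ((0:ℝ) : Circle1) := by
          rw [ψ_spec a, sub_self]
          norm_num
        have h6 : ψ a = 0 := by
          rw [AddCircle.coe_eq_coe_iff_of_mem_Ico (a := (0:ℝ))
            (by rw [zero_add]; exact ψ_mem a) (by rw [zero_add]; constructor <;> norm_num)] at h5
          exact h5
        linarith
      · have hS : ψ a ∈ S := ⟨a, ⟨haA, hne⟩, rfl⟩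
        rcases tri (ψ a) hS with h | h
        · have : ψ a ∈ Su := Set.mem_insert_of_mem _ ⟨hS, h⟩
          have := hu_ub _ this
          linarith
        · have : ψ a ∈ Sv := Set.mem_insert_of_mem _ ⟨hS, h⟩
          have := hv_lb _ this
          linarith
  · -- disjoint hulls implies unlinked
    intro hdisj
    by_contra hnl
    haveI := infinite_circle1
    have hAcne : Aᶜ.Nonempty := by
      rw [Set.nonempty_compl]
      intro h
      rw [h] at hA
      exact Set.infinite_univ hA
    have hBne : B.Nonempty := by
      rcases eq_empty_or_nonempty B with rfl | h
      · obtain ⟨w, hw⟩ := hAcne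
        exact absurd ⟨w, hw, by simp⟩ hnl
      · exact h
    obtain ⟨b₀, hb₀⟩ := hBne
    have hb₀c : b₀ ∈ Aᶜ := fun h => Set.disjoint_left.mp hAB h hb₀
    have hex : ∃ b₁ ∈ B, b₁ ∉ connectedComponentIn Aᶜ b₀ := by
      by_contra h
      push_neg at h
      exact hnl ⟨b₀, hb₀c, h⟩
    obtain ⟨b₁, hb₁B, hb₁⟩ := hex
    obtain ⟨s, rfl⟩ := QuotientAddGroup.mk_surjective b₀
    obtain ⟨t', rfl⟩ := QuotientAddGroup.mk_surjective b₁
    set t := toIcoMod (zero_lt_one) s t' with htdef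
    have htmem : t ∈ Ico s (s+1) := toIcoMod_mem_Ico zero_lt_one s t'
    have hcoet : ((t : ℝ) : Circle1) = ((t' : ℝ) : Circle1) := by
      rw [QuotientAddGroup.eq_iff_sub_mem, toIcoMod_sub_self]
      exact AddSubgroup.zsmul_mem_zmultiples _ _
    have hts : t ≠ s := by
      intro h
      apply hb₁
      have : ((t' : ℝ) : Circle1) = ((s : ℝ) : Circle1) := by rw [← hcoet, h]
      rw [this]
      exact mem_connectedComponentIn hb₀c
    have hst : s < t := lt_of_le_of_ne htmem.1 (Ne.symm hts)
    have hcont : Continuous (fun x : ℝ => (x : Circle1)) := AddCircle.continuous_mk' (1:ℝ)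
    have hα : ∃ α, α ∈ Ioo s t ∧ ((α : ℝ) : Circle1) ∈ A := by
      by_contra h
      push_neg at h
      have hK : (fun x : ℝ => ((x : ℝ) : Circle1)) '' Icc s t ⊆ Aᶜ := by
        rintro _ ⟨x, hx, rfl⟩
        show ((x : ℝ) : Circle1) ∈ Aᶜ
        intro hmemA
        rcases eq_or_lt_of_le hx.1 with rfl | hlt1
        · exact hb₀c hmemA
        rcases eq_or_lt_of_le hx.2 with heq | hlt2
        · subst heq
          rw [hcoet] at hmemA
          exact Set.disjoint_left.mp hAB hmemA hb₁B
        · exact h x ⟨hlt1, hlt2⟩ hmemA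
      have hKconn : IsPreconnected ((fun x : ℝ => ((x : ℝ) : Circle1)) '' Icc s t) :=
        isPreconnected_Icc.image _ hcont.continuousOn
      have hb₀K : ((s:ℝ):Circle1) ∈ (fun x : ℝ => ((x : ℝ) : Circle1)) '' Icc s t :=
        ⟨s, ⟨le_refl s, hst.le⟩, rfl⟩
      have hsub := hKconn.subset_connectedComponentIn hb₀K hK
      apply hb₁
      rw [← hcoet]
      exact hsub ⟨t, ⟨hst.le, le_refl t⟩, rfl⟩
    obtain ⟨α, hαmem, hαA⟩ := hα
    have hβ : ∃ β, β ∈ Ioo t (s+1) ∧ ((β : ℝ) : Circle1) ∈ A := by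
      by_contra h
      push_neg at h
      have hcoes1 : ((s + 1 : ℝ) : Circle1) = ((s : ℝ) : Circle1) :=
        AddCircle.coe_add_period 1 s
      have hK : (fun x : ℝ => ((x : ℝ) : Circle1)) '' Icc t (s+1) ⊆ Aᶜ := by
        rintro _ ⟨x, hx, rfl⟩
        show ((x : ℝ) : Circle1) ∈ Aᶜ
        intro hmemA
        rcases eq_or_lt_of_le hx.1 with rfl | hlt1
        · rw [hcoet] at hmemA
          exact Set.disjoint_left.mp hAB hmemA hb₁B
        rcases eq_or_lt_of_le hx.2 with heq | hlt2
        · subst heq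
          rw [hcoes1] at hmemA
          exact hb₀c hmemA
        · exact h x ⟨hlt1, hlt2⟩ hmemA
      have hKconn : IsPreconnected ((fun x : ℝ => ((x : ℝ) : Circle1)) '' Icc t (s+1)) :=
        isPreconnected_Icc.image _ hcont.continuousOn
      have hb₀K : ((s:ℝ):Circle1) ∈ (fun x : ℝ => ((x : ℝ) : Circle1)) '' Icc t (s+1) :=
        ⟨s + 1, ⟨htmem.2.le, le_refl _⟩, hcoes1⟩
      have hsub := hKconn.subset_connectedComponentIn hb₀K hK
      apply hb₁
      rw [← hcoet]
      exact hsub ⟨t, ⟨le_refl t, htmem.2.le⟩, rfl⟩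
    obtain ⟨β, hβmem, hβA⟩ := hβ
    obtain ⟨x, hx1, hx2⟩ := cross_lemma s t α β hαmem.1 hαmem.2 hβmem.1 hβmem.2
    apply Set.not_disjoint_iff.mpr ?_ hdisj
    refine ⟨x, ?_, ?_⟩
    · apply segment_subset_convexHull ?_ ?_ hx1
      · exact ⟨((α:ℝ):Circle1), hαA, circleEmbed_coe α⟩
      · exact ⟨((β:ℝ):Circle1), hβA, circleEmbed_coe β⟩
    · apply segment_subset_convexHull ?_ ?_ hx2
      · exact ⟨((s:ℝ):Circle1), hb₀, circleEmbed_coe s⟩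
      · refine ⟨((t':ℝ):Circle1), hb₁B, ?_⟩
        rw [← hcoet]
        exact circleEmbed_coe t
end

section
/- For any holomorphic germ f₀ fixing 0 with f₀(z) = z + z² + O(z³), and for sufficiently small ε > 0, the disk D_attr = {z : |z + ε| < ε} satisfies f₀(D_attr) ⊆ D_attr, and every orbit starting in D_attr converges to 0. -/
open Filter Metric

lemma petal_mem_iff (ε : ℝ) (hε : 0 < ε) (z : ℂ) :
    z ∈ ball (-(ε : ℂ)) ε ↔ z ≠ 0 ∧ 1/(2*ε) < (-(1/z)).re := by
  rw [mem_ball, dist_eq_norm, sub_neg_eq_add]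
  have hns : ∀ w : ℂ, ‖w‖ ^ 2 = Complex.normSq w := by
    intro w; rw [Complex.sq_norm]
  constructor
  · intro h
    have hz : z ≠ 0 := by
      rintro rfl
      simp [abs_of_pos hε] at h
    have hs : 0 < Complex.normSq z := Complex.normSq_pos.2 hz
    have h2 : Complex.normSq (z + ε) < ε^2 := by
      rw [← hns]
      have : (0:ℝ) ≤ ‖z + (ε:ℂ)‖ := norm_nonneg _
      nlinarith
    rw [Complex.normSq_apply] at h2 hs
    simp only [Complex.add_re, Complex.add_im, Complex.ofReal_re, Complex.ofReal_im,
      add_zero] at h2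
    refine ⟨hz, ?_⟩
    have hre : (-(1/z)).re = -z.re / (z.re*z.re + z.im*z.im) := by
      simp [Complex.div_re, Complex.normSq_apply, neg_div]
    rw [hre, lt_div_iff₀ hs, one_div, inv_mul_eq_div, div_lt_iff₀ (by positivity : (0:ℝ) < 2*ε)]
    nlinarith
  · rintro ⟨hz, h⟩
    have hs : 0 < Complex.normSq z := Complex.normSq_pos.2 hz
    rw [Complex.normSq_apply] at hs
    have hre : (-(1/z)).re = -z.re / (z.re*z.re + z.im*z.im) := by
      simp [Complex.div_re, Complex.normSq_apply, neg_div]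
    rw [hre, lt_div_iff₀ hs, one_div, inv_mul_eq_div,
      div_lt_iff₀ (by positivity : (0:ℝ) < 2*ε)] at h
    have h1 : ‖z + (ε:ℂ)‖^2 < ε^2 := by
      rw [hns, Complex.normSq_apply]
      simp only [Complex.add_re, Complex.add_im, Complex.ofReal_re, Complex.ofReal_im, add_zero]
      nlinarith
    nlinarith [norm_nonneg (z + (ε:ℂ))]

lemma petal_key (f₀ : ℂ → ℂ) (M r ε : ℝ) (hM : 1 ≤ M) (hr : 0 < r)
    (hg : ∀ z : ℂ, ‖z‖ < r → ‖f₀ z - (z + z^2)‖ ≤ M * ‖z‖^3)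
    (hε : 0 < ε) (h2r : 2*ε < r) (hεM : ε * M ≤ 1/16)
    (z : ℂ) (hz : z ∈ ball (-(ε:ℂ)) ε) :
    f₀ z ≠ 0 ∧ (-(1/z)).re + 1/2 ≤ (-(1/(f₀ z))).re := by
  have hM0 : (0:ℝ) < M := lt_of_lt_of_le one_pos hM
  have hε16 : ε ≤ 1/16 := by nlinarith
  obtain ⟨hz0, hzre⟩ := (petal_mem_iff ε hε z).1 hz
  have hzn : ‖z‖ < 2*ε := by
    have h := mem_ball.1 hz
    rw [dist_eq_norm, sub_neg_eq_add] at h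
    have h1 : ‖z‖ ≤ ‖z + (ε:ℂ)‖ + ‖(ε:ℂ)‖ := by
      simpa using norm_sub_le (z + (ε:ℂ)) (ε:ℂ)
    have h2 : ‖(ε:ℂ)‖ = ε := by simp [abs_of_pos hε]
    linarith [h1, h2 ▸ h]
  have hzpos : 0 < ‖z‖ := norm_pos_iff.2 hz0
  obtain ⟨u, hgdef⟩ : ∃ u : ℂ, f₀ z = z + z^2 + u*z^2 :=
    ⟨(f₀ z - (z + z^2))/z^2, by field_simp; ring⟩
  have hub : ‖u‖ ≤ M * ‖z‖ := by
    have h := hg z (by linarith)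
    rw [hgdef] at h
    have he : z + z^2 + u*z^2 - (z + z^2) = u*z^2 := by ring
    rw [he, norm_mul, norm_pow] at h
    nlinarith [mul_pos hzpos hzpos]
  have huε : ‖u‖ ≤ 2*M*ε := by nlinarith
  have hfz : f₀ z = z * (1 + z + u*z) := by rw [hgdef]; ring
  have hd1 : ‖(1 + z + u*z) - 1‖ ≤ 1/4 := by
    have he : (1 + z + u*z) - 1 = z + u*z := by ring
    rw [he]
    calc ‖z + u*z‖ ≤ ‖z‖ + ‖u‖*‖z‖ := by
          simpa [norm_mul] using norm_add_le z (u*z)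
      _ ≤ 1/4 := by nlinarith
  have hdn : (3:ℝ)/4 ≤ ‖(1 + z + u*z)‖ := by
    have h := abs_norm_sub_norm_le (1 + z + u*z) 1
    rw [abs_le] at h
    have h1 : ‖(1:ℂ)‖ = 1 := norm_one
    linarith [h.2, h1 ▸ h.2]
  have hd0 : (1 + z + u*z) ≠ 0 := by
    intro h; rw [h] at hdn; simp at hdn; linarith
  have hf0 : f₀ z ≠ 0 := by rw [hfz]; exact mul_ne_zero hz0 hd0
  refine ⟨hf0, ?_⟩
  have heq : -(1/(f₀ z)) = -(1/z) + (1 + u)/(1 + z + u*z) := by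
    rw [hfz]
    have hd0' : 1 + z + z*u ≠ 0 := by rw [mul_comm]; exact hd0
    field_simp
    ring
  have hu1 : ‖(1 + u)/(1 + z + u*z) - 1‖ ≤ 1/2 := by
    have he : (1 + u)/(1 + z + u*z) - 1 = (u - z - u*z)/(1 + z + u*z) := by
      field_simp
      ring
    rw [he, norm_div]
    have hnum : ‖u - z - u*z‖ ≤ 3/8 := by
      calc ‖u - z - u*z‖ ≤ ‖u‖ + ‖z‖ + ‖u‖*‖z‖ := by
            have a1 := norm_sub_le (u - z) (u*z)
            have a2 := norm_sub_le u z
            rw [norm_mul] at a1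
            linarith
        _ ≤ 3/8 := by nlinarith
    calc ‖u - z - u*z‖ / ‖1 + z + u*z‖ ≤ (3/8) / (3/4) :=
          div_le_div₀ (by norm_num) hnum (by norm_num) hdn
      _ = 1/2 := by norm_num
  have hure : (1/2 : ℝ) ≤ ((1 + u)/(1 + z + u*z)).re := by
    set w : ℂ := (1 + u)/(1 + z + u*z) with hw
    have h1 : |(w - 1).re| ≤ ‖w - 1‖ := by
      exact Complex.abs_re_le_norm _
    have h2 : (w - 1).re = w.re - 1 := by simp
    rw [h2, abs_le] at h1
    linarith [h1.1]
  rw [heq, Complex.add_re]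
  linarith

/-- For a holomorphic germ `f₀` fixing `0` with `f₀ z = z + z² + O(z³)` (i.e. `f₀ 0 = 0`,
`f₀' 0 = 1`, `f₀'' 0 = 2`), for all sufficiently small `ε > 0` the disk
`D_attr = {z : |z + ε| < ε}` satisfies `f₀ (D_attr) ⊆ D_attr`, and every orbit starting in
`D_attr` converges to `0`. -/
theorem attracting_petal_exists (f₀ : ℂ → ℂ) (hf : AnalyticAt ℂ f₀ 0)
    (h0 : f₀ 0 = 0) (h1 : deriv f₀ 0 = 1) (h2 : iteratedDeriv 2 f₀ 0 = 2) :
    ∃ ε₀ > 0, ∀ ε : ℝ, 0 < ε → ε < ε₀ →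
      Set.MapsTo f₀ (ball (-(ε : ℂ)) ε) (ball (-(ε : ℂ)) ε) ∧
      ∀ z ∈ ball (-(ε : ℂ)) ε,
        Tendsto (fun n => f₀^[n] z) atTop (nhds 0) := by
  obtain ⟨p, hp⟩ := hf
  obtain ⟨R, hball⟩ := hp
  have hp : HasFPowerSeriesAt f₀ p 0 := ⟨R, hball⟩
  have hcoeff : ∀ n : ℕ, (Nat.factorial n : ℂ) * p.coeff n = iteratedDeriv n f₀ 0 := by
    intro n
    have h := hball.factorial_smul (1 : ℂ) n
    rw [iteratedDeriv] at *
    simpa [FormalMultilinearSeries.apply_eq_pow_smul_coeff, nsmul_eq_mul] using h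
  have c0 : p.coeff 0 = 0 := by simpa [h0, iteratedDeriv_zero] using hcoeff 0
  have c1 : p.coeff 1 = 1 := by simpa [h1, iteratedDeriv_one] using hcoeff 1
  have c2 : p.coeff 2 = 1 := by
    have h := hcoeff 2
    rw [h2] at h
    norm_num at h
    exact h
  -- big-O bound
  obtain ⟨M, hM, r, hr, hgb⟩ :
      ∃ M ≥ (1:ℝ), ∃ r > (0:ℝ), ∀ z : ℂ, ‖z‖ < r → ‖f₀ z - (z + z^2)‖ ≤ M * ‖z‖^3 := by
    have hO := hp.isBigO_sub_partialSum_pow 3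
    have hps : ∀ y : ℂ, p.partialSum 3 y = y + y^2 := by
      intro y
      simp [FormalMultilinearSeries.partialSum, Finset.sum_range_succ,
        FormalMultilinearSeries.apply_eq_pow_smul_coeff, c0, c1, c2]
    simp only [zero_add, hps] at hO
    rw [Asymptotics.isBigO_iff] at hO
    obtain ⟨C, hC⟩ := hO
    rw [Metric.eventually_nhds_iff] at hC
    obtain ⟨r, hr, hCr⟩ := hC
    refine ⟨max C 1, le_max_right _ _, r, hr, fun z hz => ?_⟩
    have h := hCr (y := z) (by simpa [dist_eq_norm] using hz)
    calc ‖f₀ z - (z + z^2)‖ ≤ C * ‖‖z‖^3‖ := h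
      _ ≤ max C 1 * ‖z‖^3 := by
          rw [Real.norm_eq_abs, abs_of_nonneg (by positivity)]
          exact mul_le_mul_of_nonneg_right (le_max_left _ _) (by positivity)
  have hM0 : (0:ℝ) < M := lt_of_lt_of_le one_pos hM
  refine ⟨min (r/2) (1/(16*M)), lt_min (by positivity) (by positivity), ?_⟩
  intro ε hε hεlt
  have h2r : 2*ε < r := by
    have := lt_of_lt_of_le hεlt (min_le_left _ _); linarith
  have hεM : ε * M ≤ 1/16 := by
    have h := lt_of_lt_of_le hεlt (min_le_right _ _)
    rw [lt_div_iff₀ (by positivity)] at h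
    linarith
  constructor
  · intro z hz
    obtain ⟨hz0, hzre⟩ := (petal_mem_iff ε hε z).1 hz
    obtain ⟨hf0, hstep⟩ := petal_key f₀ M r ε hM hr hgb hε h2r hεM z hz
    exact (petal_mem_iff ε hε _).2 ⟨hf0, by linarith⟩
  · intro z hz
    have horb : ∀ n : ℕ, f₀^[n] z ∈ ball (-(ε:ℂ)) ε ∧
        1/(2*ε) + n/2 < (-(1/(f₀^[n] z))).re := by
      intro n
      induction n with
      | zero =>
        refine ⟨by simpa using hz, ?_⟩
        simpa using ((petal_mem_iff ε hε z).1 hz).2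
      | succ n ih =>
        obtain ⟨hmem, hre⟩ := ih
        obtain ⟨hf0, hstep⟩ := petal_key f₀ M r ε hM hr hgb hε h2r hεM _ hmem
        have hre' : 1/(2*ε) + (n+1 : ℕ)/2 < (-(1/(f₀^[n+1] z))).re := by
          rw [Function.iterate_succ_apply']
          push_cast
          linarith
        refine ⟨(petal_mem_iff ε hε _).2 ⟨?_, ?_⟩, hre'⟩
        · rw [Function.iterate_succ_apply']; exact hf0
        · have hn : (0:ℝ) ≤ (n+1 : ℕ)/2 := by positivity
          linarith
    have hbound : ∀ n : ℕ, ‖f₀^[n] z‖ ≤ (1/(2*ε) + n/2)⁻¹ := by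
      intro n
      obtain ⟨hmem, hre⟩ := horb n
      have hw0 : f₀^[n] z ≠ 0 := ((petal_mem_iff ε hε _).1 hmem).1
      have hwpos : 0 < ‖f₀^[n] z‖ := norm_pos_iff.2 hw0
      have h1 : (-(1/(f₀^[n] z))).re ≤ ‖f₀^[n] z‖⁻¹ := by
        calc (-(1/(f₀^[n] z))).re ≤ ‖-(1/(f₀^[n] z))‖ := Complex.re_le_norm _
          _ = ‖f₀^[n] z‖⁻¹ := by rw [norm_neg, one_div, norm_inv]
      have hpos : (0:ℝ) < 1/(2*ε) + n/2 := by positivity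
      have h2 : 1/(2*ε) + n/2 < ‖f₀^[n] z‖⁻¹ := lt_of_lt_of_le hre h1
      rw [← inv_inv (‖f₀^[n] z‖)]
      exact inv_anti₀ hpos h2.le
    have ht : Tendsto (fun n : ℕ => (1/(2*ε) + n/2)⁻¹) atTop (nhds 0) := by
      apply Tendsto.inv_tendsto_atTop
      apply tendsto_atTop_add_const_left
      exact Tendsto.atTop_div_const (by norm_num) tendsto_natCast_atTop_atTop
    rw [tendsto_zero_iff_norm_tendsto_zero]
    exact squeeze_zero (fun n => norm_nonneg _) hbound ht
end
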